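/- arXiv:math/0007022 — 4 statements merged into one kernel-verified Lean document; each statement's English description precedes it below -/
import Mathlib

section
/- On the surface S ⊂ C^4 defined by the equations xy = (z²−1)z, zu = (y²−1)y, xu = (y²−1)(z²−1), the map ∂₁ given by ∂₁(x) = 0, ∂₁(z) = x², ∂₁(y) = (3z²−1)x, ∂₁(u) = 2z(y²−1)x + 2y(z²−1)(3z²−1) is a well-defined derivation of the coordinate ring of S (i.e., ∂₁ annihilates the three defining relations). -/
open MvPolynomial

/- Coordinates: `x = X 0`, `y = X 1`, `z = X 2`, `u = X 3`. -/

/-- Relation `xy = (z²-1)z`. -/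
noncomputable abbrev rel1 : MvPolynomial (Fin 4) ℂ :=
  X 0 * X 1 - ((X 2) ^ 2 - 1) * X 2

/-- Relation `zu = (y²-1)y`. -/
noncomputable abbrev rel2 : MvPolynomial (Fin 4) ℂ :=
  X 2 * X 3 - ((X 1) ^ 2 - 1) * X 1

/-- Relation `xu = (y²-1)(z²-1)`. -/
noncomputable abbrev rel3 : MvPolynomial (Fin 4) ℂ :=
  X 0 * X 3 - ((X 1) ^ 2 - 1) * ((X 2) ^ 2 - 1)

/-- The ideal `I` of the surface `S ⊂ ℂ⁴`. -/
noncomputable abbrev surfIdeal : Ideal (MvPolynomial (Fin 4) ℂ) :=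
  Ideal.span {rel1, rel2, rel3}

/-- The coordinate ring `ℂ[x,y,z,u]/I` of `S`. -/
abbrev surfRing4 : Type := MvPolynomial (Fin 4) ℂ ⧸ surfIdeal

/-- The prescribed values `∂₁x = 0`, `∂₁y = (3z²-1)x`, `∂₁z = x²`,
`∂₁u = 2z(y²-1)x + 2y(z²-1)(3z²-1)`. -/
noncomputable abbrev d1vals : Fin 4 → MvPolynomial (Fin 4) ℂ :=
  ![0,
    (3 * (X 2) ^ 2 - 1) * X 0,
    (X 0) ^ 2,
    2 * X 2 * ((X 1) ^ 2 - 1) * X 0 + 2 * X 1 * ((X 2) ^ 2 - 1) * (3 * (X 2) ^ 2 - 1)]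

/-- The derivation `∂₁` of `ℂ[x,y,z,u]` with the prescribed values on the variables. -/
noncomputable abbrev d1 : Derivation ℂ (MvPolynomial (Fin 4) ℂ) (MvPolynomial (Fin 4) ℂ) :=
  MvPolynomial.mkDerivation ℂ d1vals


lemma d1_rel1 : d1 rel1 = 0 := by
  simp only [rel1, map_sub, Derivation.leibniz, Derivation.leibniz_pow, map_one,
    mkDerivation_X, d1vals, smul_eq_mul]
  norm_num [Matrix.cons_val_zero, Matrix.cons_val_one, Matrix.cons_val_two, Matrix.cons_val_three, Matrix.tail_cons, Matrix.head_cons]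
  ring

lemma d1_rel3 : d1 rel3 = 0 := by
  simp only [rel3, map_sub, Derivation.leibniz, Derivation.leibniz_pow, map_one,
    mkDerivation_X, d1vals, smul_eq_mul]
  norm_num [Matrix.cons_val_zero, Matrix.cons_val_one, Matrix.cons_val_two, Matrix.cons_val_three, Matrix.tail_cons, Matrix.head_cons]
  ring

lemma d1_rel2 : d1 rel2 = X 0 * rel3 - (2 * X 1 * (3 * (X 2) ^ 2 - 1)) * rel1 := by
  simp only [rel1, rel2, rel3, map_sub, Derivation.leibniz, Derivation.leibniz_pow, map_one,
    mkDerivation_X, d1vals, smul_eq_mul]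
  norm_num [Matrix.cons_val_zero, Matrix.cons_val_one, Matrix.cons_val_two, Matrix.cons_val_three, Matrix.tail_cons, Matrix.head_cons]
  ring

lemma d1_mem : d1 rel1 ∈ surfIdeal ∧ d1 rel2 ∈ surfIdeal ∧ d1 rel3 ∈ surfIdeal := by
  refine ⟨by rw [d1_rel1]; exact zero_mem _, ?_, by rw [d1_rel3]; exact zero_mem _⟩
  rw [d1_rel2]
  exact sub_mem (Ideal.mul_mem_left _ _ (Ideal.subset_span (by simp)))
    (Ideal.mul_mem_left _ _ (Ideal.subset_span (by simp)))

lemma d1_ideal {p : MvPolynomial (Fin 4) ℂ} (hp : p ∈ surfIdeal) : d1 p ∈ surfIdeal := by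
  induction hp using Submodule.span_induction with
  | mem q hq =>
    rcases hq with rfl | rfl | rfl
    · exact d1_mem.1
    · exact d1_mem.2.1
    · exact d1_mem.2.2
  | zero => simp only [map_zero]; exact zero_mem _
  | add a b ha hb iha ihb => rw [map_add]; exact add_mem iha ihb
  | smul r a ha iha =>
    rw [smul_eq_mul, Derivation.leibniz, smul_eq_mul, smul_eq_mul]
    exact add_mem (Ideal.mul_mem_left _ _ iha) (Ideal.mul_mem_right _ _ ha)

/-- `∂₁` annihilates the three defining relations of `S` modulo `I`, hence descends
to a well-defined derivation of the coordinate ring of `S` taking the prescribed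
values on `x, y, z, u`. -/
theorem stmt_6 :
    (d1 rel1 ∈ surfIdeal ∧ d1 rel2 ∈ surfIdeal ∧ d1 rel3 ∈ surfIdeal) ∧
    ∃ D : Derivation ℂ surfRing4 surfRing4,
      ∀ i : Fin 4, D (Ideal.Quotient.mk surfIdeal (X i)) =
        Ideal.Quotient.mk surfIdeal (d1vals i) :=
  have hd : ∀ p : MvPolynomial (Fin 4) ℂ,
      Ideal.Quotient.mkₐ ℂ surfIdeal p = 0 → Ideal.Quotient.mkₐ ℂ surfIdeal (d1 p) = 0 := by
    intro p hp
    rw [Ideal.Quotient.mkₐ_eq_mk, Ideal.Quotient.eq_zero_iff_mem] at hp ⊢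
    exact d1_ideal hp
  ⟨d1_mem,
    Derivation.liftOfSurjective (f := Ideal.Quotient.mkₐ ℂ surfIdeal)
      (Ideal.Quotient.mkₐ_surjective ℂ surfIdeal) hd,
    fun i => by
      have := Derivation.liftOfSurjective_apply (f := Ideal.Quotient.mkₐ ℂ surfIdeal)
        (Ideal.Quotient.mkₐ_surjective ℂ surfIdeal) hd (X i)
      simpa [mkDerivation_X] using this⟩
end

section
/- The fiber over x = 0 of the projection (x,y,z,u) ↦ x on the surface S ⊂ C^4 defined by xy=(z²−1)z, zu=(y²−1)y, xu=(y²−1)(z²−1) consists of exactly four irreducible components: G₁ = {x=0, z=1}, G₂ = {x=0, z=−1}, G₃ = {x=0, z=0, y=1}, G₄ = {x=0, z=0, y=−1}, each isomorphic to an affine line. -/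
def S4 : Set (ℂ × ℂ × ℂ × ℂ) :=
  {s | s.1 * s.2.1 = (s.2.2.1 ^ 2 - 1) * s.2.2.1 ∧
       s.2.2.1 * s.2.2.2 = (s.2.1 ^ 2 - 1) * s.2.1 ∧
       s.1 * s.2.2.2 = (s.2.1 ^ 2 - 1) * (s.2.2.1 ^ 2 - 1)}

noncomputable def fiberComp : Fin 4 → ℂ → ℂ × ℂ × ℂ × ℂ :=
  ![fun y => (0, y, 1, (y ^ 2 - 1) * y),
    fun y => (0, y, -1, -((y ^ 2 - 1) * y)),
    fun u => (0, 1, 0, u),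
    fun u => (0, -1, 0, u)]

/-- The fiber over `x = 0` of the projection `(x,y,z,u) ↦ x` on `S` consists of
exactly the four pairwise disjoint irreducible components
`G₁ = {x=0, z=1}`, `G₂ = {x=0, z=-1}`, `G₃ = {x=0, z=0, y=1}`,
`G₄ = {x=0, z=0, y=-1}`, each isomorphic to the affine line `ℂ`. -/
theorem stmt_8 :
    ({s ∈ S4 | s.1 = 0} = ⋃ i : Fin 4, Set.range (fiberComp i)) ∧
    (∀ i j : Fin 4, i ≠ j → Disjoint (Set.range (fiberComp i)) (Set.range (fiberComp j))) ∧
    (∀ i : Fin 4, Function.Injective (fiberComp i)) := by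
  refine ⟨?_, ?_, ?_⟩
  · ext s
    simp only [Set.mem_setOf_eq, S4, Set.mem_iUnion, Set.mem_range]
    constructor
    · rintro ⟨⟨h1, h2, h3⟩, hx⟩
      obtain ⟨x, y, z, u⟩ := s
      simp only at h1 h2 h3 hx
      subst hx
      rw [zero_mul] at h1 h3
      have hz : z = 0 ∨ z = 1 ∨ z = -1 := by
        have h : z * ((z - 1) * (z + 1)) = 0 := by linear_combination -h1
        rcases mul_eq_zero.1 h with h | h
        · exact Or.inl h
        · rcases mul_eq_zero.1 h with h | h
          · exact Or.inr (Or.inl (by linear_combination h))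
          · exact Or.inr (Or.inr (by linear_combination h))
      rcases hz with rfl | rfl | rfl
      · have hy : y = 1 ∨ y = -1 := by
          have h : (y - 1) * (y + 1) = 0 := by linear_combination h3
          rcases mul_eq_zero.1 h with h | h
          · exact Or.inl (by linear_combination h)
          · exact Or.inr (by linear_combination h)
        rcases hy with rfl | rfl
        · exact ⟨2, u, rfl⟩
        · exact ⟨3, u, rfl⟩
      · have hu : u = (y ^ 2 - 1) * y := by linear_combination h2
        subst hu
        exact ⟨0, y, rfl⟩
      · have hu : u = -((y ^ 2 - 1) * y) := by linear_combination -h2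
        subst hu
        exact ⟨1, y, rfl⟩
    · rintro ⟨i, c, rfl⟩
      fin_cases i <;> refine ⟨⟨?_, ?_, ?_⟩, ?_⟩ <;> norm_num [fiberComp]
  · intro i j hij
    fin_cases i <;> fin_cases j <;>
      first
        | exact absurd rfl hij
        | · rw [Set.disjoint_left]
            rintro a ⟨c, rfl⟩ ⟨d, hd⟩
            norm_num [fiberComp, Prod.ext_iff] at hd
  · intro i a b h
    fin_cases i
    · have h2 := congrArg (fun p : ℂ × ℂ × ℂ × ℂ => p.2.1) h
      simpa [fiberComp] using h2
    · have h2 := congrArg (fun p : ℂ × ℂ × ℂ × ℂ => p.2.1) h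
      simpa [fiberComp] using h2
    · have h2 := congrArg (fun p : ℂ × ℂ × ℂ × ℂ => p.2.2.2) h
      simpa [fiberComp] using h2
    · have h2 := congrArg (fun p : ℂ × ℂ × ℂ × ℂ => p.2.2.2) h
      simpa [fiberComp] using h2
end

section
/- The surface S ⊂ C^4 defined by xy=(z²−1)z, zu=(y²−1)y, xu=(y²−1)(z²−1) is smooth, i.e., at every point of S the Jacobian matrix of the three defining equations has rank 2. -/
open Matrix

/-- If a nonzero vector is in the left kernel of a 3×4 matrix, its rank is at most 2. -/
lemma aux_rank_le_two (A : Matrix (Fin 3) (Fin 4) ℂ) (v : Fin 3 → ℂ)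
    (hv : v ≠ 0) (h : Matrix.vecMul v A = 0) : A.rank ≤ 2 := by
  rw [← A.rank_transpose]
  have hker : v ∈ LinearMap.ker (Aᵀ.mulVecLin) := by
    simp [Matrix.mulVecLin, Matrix.mulVec_transpose, h]
  have hrn := LinearMap.finrank_range_add_finrank_ker (Aᵀ.mulVecLin)
  have hdom : Module.finrank ℂ (Fin 3 → ℂ) = 3 := by simp
  have hkpos : 0 < Module.finrank ℂ (LinearMap.ker (Aᵀ.mulVecLin)) := by
    rcases Nat.eq_zero_or_pos (Module.finrank ℂ (LinearMap.ker (Aᵀ.mulVecLin))) with h0 | h0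
    · exfalso
      rw [Submodule.finrank_eq_zero] at h0
      rw [h0] at hker
      exact hv ((Submodule.mem_bot ℂ).1 hker)
    · exact h0
  have hr : Aᵀ.rank = Module.finrank ℂ (LinearMap.range Aᵀ.mulVecLin) := rfl
  rw [hdom] at hrn
  omega

/-- A nonsingular 2×2 submatrix forces rank at least 2. -/
lemma aux_two_le_rank (A : Matrix (Fin 3) (Fin 4) ℂ) (r : Fin 2 → Fin 3) (c : Fin 2 → Fin 4)
    (h : (A.submatrix r c).det ≠ 0) : 2 ≤ A.rank := by
  have key : A.submatrix r c =
      ((1 : Matrix (Fin 3) (Fin 3) ℂ).submatrix r (Equiv.refl _)) * A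
        * ((1 : Matrix (Fin 4) (Fin 4) ℂ).submatrix (Equiv.refl _) c) := by
    rw [Matrix.one_submatrix_mul, Matrix.mul_submatrix_one]
    simp [Function.comp]
  have hrk : (A.submatrix r c).rank = 2 := by
    have hu : IsUnit (A.submatrix r c) :=
      (Matrix.isUnit_iff_isUnit_det _).2 (isUnit_iff_ne_zero.2 h)
    simpa using Matrix.rank_of_isUnit _ hu
  calc (2 : ℕ) = (A.submatrix r c).rank := hrk.symm
    _ ≤ (((1 : Matrix (Fin 3) (Fin 3) ℂ).submatrix r (Equiv.refl _)) * A).rank := by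
        rw [key]; exact (Matrix.rank_mul_le _ _).trans (min_le_left _ _)
    _ ≤ A.rank := (Matrix.rank_mul_le _ _).trans (min_le_right _ _)

/-- The surface `S ⊂ ℂ⁴` defined by `xy=(z²-1)z`, `zu=(y²-1)y`, `xu=(y²-1)(z²-1)`
is smooth: at every point of `S` the Jacobian matrix of the three defining
equations with respect to `(x, y, z, u)` has rank `2`. -/
theorem stmt_9 :
    ∀ x y z u : ℂ,
      x * y = (z ^ 2 - 1) * z →
      z * u = (y ^ 2 - 1) * y →
      x * u = (y ^ 2 - 1) * (z ^ 2 - 1) →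
      Matrix.rank
        (!![y, x, 1 - 3 * z ^ 2, 0;
            0, 1 - 3 * y ^ 2, u, z;
            u, -2 * y * (z ^ 2 - 1), -2 * z * (y ^ 2 - 1), x] : Matrix (Fin 3) (Fin 4) ℂ)
        = 2 := by
  intro x y z u h1 h2 h3
  set A : Matrix (Fin 3) (Fin 4) ℂ :=
    !![y, x, 1 - 3 * z ^ 2, 0;
       0, 1 - 3 * y ^ 2, u, z;
       u, -2 * y * (z ^ 2 - 1), -2 * z * (y ^ 2 - 1), x] with hA
  apply le_antisymm
  · -- rank ≤ 2
    by_cases hv : (![u, z ^ 2 - 1, -y] : Fin 3 → ℂ) = 0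
    · -- then z² = 1, use the other syzygy
      have hz2 : z ^ 2 - 1 = 0 := by have := congrFun hv 1; simpa using this
      have hz : z ≠ 0 := by
        intro h0; rw [h0] at hz2; norm_num at hz2
      apply aux_rank_le_two A ![y ^ 2 - 1, x, -z]
      · intro h0
        have := congrFun h0 2
        simp at this
        exact hz this
      · ext j
        fin_cases j
        · simp [hA, Matrix.vecMul, dotProduct, Fin.sum_univ_three]
          linear_combination -h2
        · simp [hA, Matrix.vecMul, dotProduct, Fin.sum_univ_three]
          linear_combination (-2 * y) * h1
        · simp [hA, Matrix.vecMul, dotProduct, Fin.sum_univ_three]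
          linear_combination h3
        · simp [hA, Matrix.vecMul, dotProduct, Fin.sum_univ_three]
          ring
    · apply aux_rank_le_two A ![u, z ^ 2 - 1, -y] hv
      ext j
      fin_cases j
      · simp [hA, Matrix.vecMul, dotProduct, Fin.sum_univ_three]
        ring
      · simp [hA, Matrix.vecMul, dotProduct, Fin.sum_univ_three]
        linear_combination h3
      · simp [hA, Matrix.vecMul, dotProduct, Fin.sum_univ_three]
        linear_combination (-2 * z) * h2
      · simp [hA, Matrix.vecMul, dotProduct, Fin.sum_univ_three]
        linear_combination -h1
  · -- rank ≥ 2
    by_cases hy : y = 0 <;> by_cases hz : z = 0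
    · -- y = 0, z = 0 : xu = 1
      have hxu : x * u = 1 := by rw [h3, hy, hz]; ring
      have hu : u ≠ 0 := by intro h0; rw [h0, mul_zero] at hxu; exact one_ne_zero hxu.symm
      apply aux_two_le_rank A ![1, 2] ![0, 1]
      rw [Matrix.det_fin_two]
      simp [hA, hy, hz]
      exact hu
    · -- y = 0, z ≠ 0 : z² = 1
      have hz2 : z ^ 2 = 1 := by
        have h' : (z ^ 2 - 1) * z = 0 := by rw [← h1, hy]; ring
        rcases mul_eq_zero.1 h' with h'' | h''
        · exact sub_eq_zero.1 h''
        · exact absurd h'' hz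
      apply aux_two_le_rank A ![1, 2] ![2, 3]
      have hu : u = 0 := by
        have hz0 : z * u = 0 := by rw [h2, hy]; ring
        exact (mul_eq_zero.1 hz0).resolve_left hz
      rw [Matrix.det_fin_two]
      simp [hA, hy, hu]
      exact hz
    · -- y ≠ 0, z = 0 : x = 0, y² = 1
      have hy2 : y ^ 2 = 1 := by
        have h' : (y ^ 2 - 1) * y = 0 := by rw [← h2, hz]; ring
        rcases mul_eq_zero.1 h' with h'' | h''
        · exact sub_eq_zero.1 h''
        · exact absurd h'' hy
      apply aux_two_le_rank A ![0, 1] ![0, 1]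
      rw [Matrix.det_fin_two]
      simp [hA, hz]
      refine ⟨hy, ?_⟩
      rw [hy2]
      norm_num
    · apply aux_two_le_rank A ![0, 1] ![0, 3]
      rw [Matrix.det_fin_two]
      simp [hA]
      exact ⟨hy, hz⟩
end

section
/- Let S_q = {(x,y,z) ∈ C^3 : xy = (z−1)(z−2)···(z−q)} for q ≥ 1. Then S_q is a smooth affine surface, and the map φ_x^λ(x,y,z) = (x, ((z+λx−1)···(z+λx−q))/x, z+λx) extends to a fixed-point-free algebraic C^+-action on S_q. -/
open Polynomial


lemma taylor_expand (p : ℂ[X]) (z t : ℂ) :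
    p.eval (z + t) = ∑ k ∈ Finset.range (p.natDegree + 1),
      (Polynomial.hasseDeriv k p).eval z * t ^ k := by
  rw [show z + t = t + z from add_comm z t, ← Polynomial.taylor_eval z p t,
    Polynomial.eval_eq_sum_range, Polynomial.natDegree_taylor]
  simp [Polynomial.taylor_coeff]

lemma key_A (p : ℂ[X]) (z lam x : ℂ) :
    x * (∑ k ∈ Finset.Icc 1 p.natDegree,
        (Polynomial.hasseDeriv k p).eval z * lam ^ k * x ^ (k - 1))
      = p.eval (z + lam * x) - p.eval z := by
  rw [taylor_expand p z (lam * x), Finset.sum_range_succ']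
  have h0 : (Polynomial.hasseDeriv 0 p).eval z * (lam * x) ^ 0 = p.eval z := by
    simp [Polynomial.hasseDeriv_zero]
  rw [h0, add_sub_cancel_right]
  rw [show Finset.Icc 1 p.natDegree = Finset.Ico 1 (p.natDegree + 1) from
    (Finset.Ico_add_one_right_eq_Icc 1 p.natDegree).symm, Finset.sum_Ico_eq_sum_range]
  simp only [Nat.add_sub_cancel]
  rw [Finset.mul_sum]
  refine Finset.sum_congr rfl fun i _ => ?_
  have : (1 : ℕ) + i - 1 = i := by omega
  rw [this, mul_pow]
  ring_nf

lemma key_B (p : ℂ[X]) (hN : 1 ≤ p.natDegree) (z lam : ℂ) :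
    (∑ k ∈ Finset.Icc 1 p.natDegree,
        (Polynomial.hasseDeriv k p).eval z * lam ^ k * (0:ℂ) ^ (k - 1))
      = lam * (derivative p).eval z := by
  rw [Finset.sum_eq_single 1]
  · simp [Polynomial.hasseDeriv_one']; ring
  · intro k hk hk1
    have hk' : k - 1 ≠ 0 := by
      simp only [Finset.mem_Icc] at hk; omega
    simp [zero_pow hk']
  · intro h; exact absurd (Finset.mem_Icc.mpr ⟨le_refl 1, hN⟩) h

noncomputable def phiAux (p : ℂ[X]) (lam : ℂ) (s : ℂ × ℂ × ℂ) : ℂ × ℂ × ℂ :=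
  (s.1,
   s.2.1 + ∑ k ∈ Finset.Icc 1 p.natDegree,
      (Polynomial.hasseDeriv k p).eval s.2.2 * lam ^ k * s.1 ^ (k - 1),
   s.2.2 + lam * s.1)


/-- For `q ≥ 1` and `p(z) = (z-1)(z-2)⋯(z-q)`, the surface
`S_q = {(x,y,z) ∈ ℂ³ : xy = p(z)}` is smooth, and the map
`φ_x^λ(x,y,z) = (x, p(z+λx)/x, z+λx)` extends to a fixed-point-free algebraic
`ℂ⁺`-action on `S_q` (given in all coordinates by polynomials in `λ, x, y, z`). -/
theorem stmt_10 (q : ℕ) (hq : 1 ≤ q) (p : Polynomial ℂ)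
    (hp : p = ∏ i ∈ Finset.Icc 1 q, (X - C (i : ℂ))) :
    -- `S_q` is smooth: the gradient `(y, x, -p'(z))` vanishes at no point of `S_q`
    (∀ x y z : ℂ, x * y = p.eval z →
        (y ≠ 0 ∨ x ≠ 0 ∨ (derivative p).eval z ≠ 0)) ∧
    -- the `ℂ⁺`-action
    ∃ φ : ℂ → (ℂ × ℂ × ℂ) → (ℂ × ℂ × ℂ),
      -- on `x ≠ 0` it is `(x,y,z) ↦ (x, p(z+λx)/x, z+λx)`
      (∀ lam x y z : ℂ, x * y = p.eval z → x ≠ 0 →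
        φ lam (x, y, z) = (x, p.eval (z + lam * x) / x, z + lam * x)) ∧
      -- it preserves `S_q`
      (∀ lam : ℂ, ∀ s : ℂ × ℂ × ℂ, s.1 * s.2.1 = p.eval s.2.2 →
        (φ lam s).1 * (φ lam s).2.1 = p.eval (φ lam s).2.2) ∧
      -- it is an action of the additive group `(ℂ, +)`
      (∀ s : ℂ × ℂ × ℂ, s.1 * s.2.1 = p.eval s.2.2 → φ 0 s = s) ∧
      (∀ lam mu : ℂ, ∀ s : ℂ × ℂ × ℂ, s.1 * s.2.1 = p.eval s.2.2 →
        φ (lam + mu) s = φ lam (φ mu s)) ∧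
      -- it is algebraic: each coordinate is a polynomial in `λ, x, y, z`
      (∃ P : Fin 3 → MvPolynomial (Fin 4) ℂ,
        ∀ lam x y z : ℂ, x * y = p.eval z →
          φ lam (x, y, z) =
            (MvPolynomial.eval ![lam, x, y, z] (P 0),
             MvPolynomial.eval ![lam, x, y, z] (P 1),
             MvPolynomial.eval ![lam, x, y, z] (P 2))) ∧
      -- it is fixed-point free
      (∀ lam : ℂ, lam ≠ 0 → ∀ s : ℂ × ℂ × ℂ, s.1 * s.2.1 = p.eval s.2.2 →
        φ lam s ≠ s) := by
  have hNdeg : p.natDegree = q := by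
    rw [hp, Polynomial.natDegree_prod_of_monic _ _ (fun i _ => monic_X_sub_C _)]
    simp only [Polynomial.natDegree_X_sub_C, Finset.sum_const, smul_eq_mul, mul_one, Nat.card_Icc]
    omega
  have hsep : p.Separable := by
    rw [hp]
    exact Polynomial.separable_prod_X_sub_C_iff'.mpr
      (fun i _ j _ h => Nat.cast_injective h)
  have hcrit : ∀ z : ℂ, p.eval z = 0 → (derivative p).eval z ≠ 0 := by
    obtain ⟨a, b, hab⟩ := hsep
    intro z hz hz'
    have := congrArg (Polynomial.eval z) hab
    simp [hz, hz'] at this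
  have hN : 1 ≤ p.natDegree := hNdeg ▸ hq
  constructor
  · intro x y z h
    by_cases hx : x = 0
    · by_cases hy : y = 0
      · right; right
        exact hcrit z (by rw [← h, hx]; ring)
      · left; exact hy
    · right; left; exact hx
  refine ⟨phiAux p, ?_, ?_, ?_, ?_, ?_, ?_⟩
  · -- formula on x ≠ 0
    intro lam x y z h hx
    unfold phiAux
    refine Prod.ext rfl (Prod.ext ?_ rfl)
    show _ = p.eval (z + lam * x) / x
    rw [eq_div_iff hx]
    have := key_A p z lam x
    linear_combination this + h
  · -- preserves S
    rintro lam ⟨x, y, z⟩ h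
    unfold phiAux
    simp only at h ⊢
    have := key_A p z lam x
    linear_combination this + h
  · -- identity
    rintro s _
    unfold phiAux
    have : ∀ z x : ℂ, (∑ k ∈ Finset.Icc 1 p.natDegree,
        (Polynomial.hasseDeriv k p).eval z * (0:ℂ) ^ k * x ^ (k - 1)) = 0 := by
      intro z x
      refine Finset.sum_eq_zero fun k hk => ?_
      have : k ≠ 0 := by simp only [Finset.mem_Icc] at hk; omega
      simp [zero_pow this]
    simp [this]
  · -- group law
    rintro lam mu ⟨x, y, z⟩ h
    unfold phiAux
    refine Prod.ext rfl (Prod.ext ?_ (by show z + (lam + mu) * x = z + mu * x + lam * x; ring))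
    show _ = (_ : ℂ)
    simp only
    by_cases hx : x = 0
    · subst hx
      rw [mul_zero, add_zero]
      rw [key_B p hN z (lam + mu), key_B p hN z mu, key_B p hN z lam]
      ring
    · apply mul_left_cancel₀ hx
      have e1 := key_A p z (lam + mu) x
      have e2 := key_A p z mu x
      have e3 := key_A p (z + mu * x) lam x
      have harg : z + mu * x + lam * x = z + (lam + mu) * x := by ring
      rw [harg] at e3
      linear_combination e1 - e2 - e3
  · -- polynomial coordinates
    have evalaux : ∀ (f : ℂ[X]) (v : Fin 4 → ℂ),
        MvPolynomial.eval v (Polynomial.aeval (MvPolynomial.X 3) f) = f.eval (v 3) := by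
      intro f v
      have h0 : MvPolynomial.eval v (Polynomial.aeval (MvPolynomial.X 3) f)
          = MvPolynomial.aeval v (Polynomial.aeval (MvPolynomial.X 3) f) := rfl
      rw [h0, ← Polynomial.aeval_algHom_apply, MvPolynomial.aeval_X,
        Polynomial.coe_aeval_eq_eval]
    refine ⟨![MvPolynomial.X 1,
        MvPolynomial.X 2 + ∑ k ∈ Finset.Icc 1 p.natDegree,
          (Polynomial.aeval (MvPolynomial.X 3) (Polynomial.hasseDeriv k p))
            * MvPolynomial.X 0 ^ k * MvPolynomial.X 1 ^ (k - 1),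
        MvPolynomial.X 3 + MvPolynomial.X 0 * MvPolynomial.X 1], ?_⟩
    intro lam x y z h
    unfold phiAux
    simp only [Matrix.cons_val_zero, Matrix.cons_val_one, Matrix.head_cons, Matrix.cons_val_two,
      Matrix.tail_cons, Matrix.cons_val_three, map_add, map_sum, map_mul, map_pow,
      MvPolynomial.eval_X, evalaux, Prod.mk.injEq, Matrix.cons_val_fin_one]
  · -- fixed-point free
    rintro lam hlam ⟨x, y, z⟩ h heq
    unfold phiAux at heq
    simp only [Prod.mk.injEq] at heq
    obtain ⟨-, h2, h3⟩ := heq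
    have hx : x = 0 := by
      have hlx : lam * x = 0 := by linear_combination h3
      rcases mul_eq_zero.mp hlx with h' | h'
      · exact absurd h' hlam
      · exact h'
    subst hx
    rw [key_B p hN z lam] at h2
    have hz : p.eval z = 0 := by rw [← h]; ring
    have := hcrit z hz
    have : lam * (derivative p).eval z = 0 := by linear_combination h2
    rcases mul_eq_zero.mp this with h' | h'
    · exact hlam h'
    · exact hcrit z hz h'
end
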